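/- Let f and c₁, ..., c_J be mutually independent real-valued Gaussian random variables with f ~ N(μ_f, σ_f²), σ_f > 0, and c_j ~ N(μ_{c_j}, σ_{c_j}²), σ_{c_j} > 0. Define the improvement I = max(0, f* - f) if c_j ≤ 0 for all j, and I = 0 otherwise. Then E[I] = (σ_f z Φ(z) + σ_f φ(z)) ∏_{j=1}^J Φ(-μ_{c_j}/σ_{c_j}), where z = (f* - μ_f)/σ_f. -/

import Mathlib

open MeasureTheory ProbabilityTheory

/-- Standard normal CDF. -/
noncomputable def stdNormalCDF (z : ℝ) : ℝ :=
  ((gaussianReal 0 1) (Set.Iic z)).toReal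

/-- Standard normal density. -/
noncomputable def stdNormalPDF (z : ℝ) : ℝ :=
  (Real.sqrt (2 * Real.pi))⁻¹ * Real.exp (-z ^ 2 / 2)


open Real Set Filter
open scoped ENNReal NNReal Topology

lemma stdNormalPDF_nonneg (x : ℝ) : 0 ≤ stdNormalPDF x := by
  unfold stdNormalPDF; positivity

lemma gaussianPDFReal_zero_one (x : ℝ) : gaussianPDFReal 0 1 x = stdNormalPDF x := by
  simp [gaussianPDFReal, stdNormalPDF, neg_div]

lemma continuous_stdNormalPDF : Continuous stdNormalPDF := by
  unfold stdNormalPDF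
  fun_prop

lemma integrable_stdNormalPDF : Integrable stdNormalPDF := by
  have h := (integrable_gaussianPDFReal 0 1)
  exact h.congr (Filter.Eventually.of_forall gaussianPDFReal_zero_one)

lemma integrable_mul_stdNormalPDF : Integrable (fun x => x * stdNormalPDF x) := by
  have h := (integrable_mul_exp_neg_mul_sq (b := (1:ℝ)/2) (by norm_num)).const_mul
    ((Real.sqrt (2 * Real.pi))⁻¹)
  refine h.congr (Filter.Eventually.of_forall fun x => ?_)
  simp only []
  unfold stdNormalPDF
  rw [show -((1:ℝ)/2) * x^2 = -x^2/2 by ring]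
  ring

lemma stdNormalCDF_eq (z : ℝ) : stdNormalCDF z = ∫ x in Iic z, stdNormalPDF x := by
  unfold stdNormalCDF
  rw [gaussianReal_apply_eq_integral 0 one_ne_zero,
    ENNReal.toReal_ofReal (by
      exact setIntegral_nonneg measurableSet_Iic fun x _ => gaussianPDFReal_nonneg 0 1 x)]
  exact setIntegral_congr_fun measurableSet_Iic fun x _ => gaussianPDFReal_zero_one x

lemma tendsto_stdNormalPDF_atBot : Tendsto stdNormalPDF atBot (𝓝 0) := by
  have h1 : Tendsto (fun x : ℝ => x ^ 2) atBot atTop := by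
    have h : Tendsto (fun x : ℝ => x ^ 2) atTop atTop := tendsto_pow_atTop two_ne_zero
    have h2 : Tendsto (Neg.neg : ℝ → ℝ) atBot atTop := tendsto_neg_atBot_atTop
    exact (h.comp h2).congr (fun x => by simp)
  have h2 : Tendsto (fun x : ℝ => -x ^ 2 / 2) atBot atBot := by
    apply Tendsto.atBot_div_const (by norm_num)
    exact tendsto_neg_atTop_atBot.comp h1
  have h3 : Tendsto (fun x : ℝ => Real.exp (-x ^ 2 / 2)) atBot (𝓝 0) :=
    Real.tendsto_exp_atBot.comp h2
  have := h3.const_mul ((Real.sqrt (2 * Real.pi))⁻¹)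
  delta stdNormalPDF
  simpa only [mul_zero] using this

lemma hasDerivAt_neg_stdNormalPDF (x : ℝ) :
    HasDerivAt (fun y => -stdNormalPDF y) (x * stdNormalPDF x) x := by
  have h1 : HasDerivAt (fun y : ℝ => -y ^ 2 / 2) (-x) x := by
    have := ((hasDerivAt_pow 2 x).neg.div_const 2)
    simpa [neg_div] using this.congr_deriv (by push_cast; ring)
  have h2 := (h1.exp.const_mul ((Real.sqrt (2 * Real.pi))⁻¹)).neg
  refine h2.congr_deriv ?_
  unfold stdNormalPDF; ring

lemma integral_Iic_mul_stdNormalPDF (z : ℝ) :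
    ∫ x in Iic z, x * stdNormalPDF x = -stdNormalPDF z := by
  have := integral_Iic_of_hasDerivAt_of_tendsto (f := fun y => -stdNormalPDF y)
    (f' := fun x => x * stdNormalPDF x) (a := z) (m := 0)
    (continuous_stdNormalPDF.neg.continuousWithinAt)
    (fun x _ => hasDerivAt_neg_stdNormalPDF x)
    (integrable_mul_stdNormalPDF.integrableOn)
    (by simpa using tendsto_stdNormalPDF_atBot.neg)
  simpa using this

lemma integral_gaussianReal_std (g : ℝ → ℝ) :
    ∫ x, g x ∂(gaussianReal 0 1) = ∫ x, stdNormalPDF x * g x := by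
  rw [gaussianReal_of_var_ne_zero 0 one_ne_zero]
  have hpdf : gaussianPDF 0 1 = fun x => ((Real.toNNReal (stdNormalPDF x) : ℝ≥0) : ℝ≥0∞) := by
    funext x
    rw [gaussianPDF, gaussianPDFReal_zero_one, ENNReal.ofReal]
  rw [hpdf, integral_withDensity_eq_integral_smul
    (show Measurable fun x => Real.toNNReal (stdNormalPDF x) from
      measurable_real_toNNReal.comp continuous_stdNormalPDF.measurable) g]
  congr 1
  funext x
  rw [NNReal.smul_def, Real.coe_toNNReal _ (stdNormalPDF_nonneg x), smul_eq_mul]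

lemma integral_max_std (z : ℝ) :
    ∫ x, max 0 (z - x) ∂(gaussianReal 0 1) = z * stdNormalCDF z + stdNormalPDF z := by
  rw [integral_gaussianReal_std]
  have hind : (fun x => stdNormalPDF x * max 0 (z - x)) =
      (Iic z).indicator (fun x => z * stdNormalPDF x - x * stdNormalPDF x) := by
    funext x
    by_cases h : x ≤ z
    · rw [Set.indicator_of_mem (by exact h)]
      rw [max_eq_right (by linarith)]
      ring
    · rw [Set.indicator_of_notMem (by exact h)]
      rw [max_eq_left (by linarith), mul_zero]
  rw [hind, integral_indicator measurableSet_Iic,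
    integral_sub ((integrable_stdNormalPDF.const_mul z).integrableOn)
      (integrable_mul_stdNormalPDF.integrableOn),
    integral_const_mul, integral_Iic_mul_stdNormalPDF, ← stdNormalCDF_eq]
  ring

lemma gaussianReal_eq_map (μ σ : ℝ) (hσ : 0 < σ) :
    gaussianReal μ ((σ ^ 2).toNNReal) =
      Measure.map (fun x => σ * x + μ) (gaussianReal 0 1) := by
  have h1 : Measure.map (fun x : ℝ => σ * x) (gaussianReal 0 1)
      = gaussianReal 0 ((.mk (σ ^ 2) (sq_nonneg σ) : ℝ≥0) * 1) := by
    simpa using gaussianReal_map_const_mul (μ := 0) (v := 1) σ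
  have h2 : Measure.map (fun x : ℝ => σ * x + μ) (gaussianReal 0 1)
      = Measure.map (· + μ) (Measure.map (fun x : ℝ => σ * x) (gaussianReal 0 1)) := by
    rw [Measure.map_map (measurable_add_const μ) (measurable_const_mul σ)]
    rfl
  rw [h2, h1, gaussianReal_map_add_const, zero_add]
  congr 1
  ext
  simp [Real.coe_toNNReal _ (sq_nonneg σ)]

lemma gaussianReal_Iic (μ σ a : ℝ) (hσ : 0 < σ) :
    ((gaussianReal μ ((σ ^ 2).toNNReal)) (Iic a)).toReal = stdNormalCDF ((a - μ) / σ) := by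
  rw [gaussianReal_eq_map μ σ hσ,
    Measure.map_apply ((measurable_const_mul σ).add_const μ) measurableSet_Iic]
  have : (fun x => σ * x + μ) ⁻¹' Iic a = Iic ((a - μ) / σ) := by
    ext x
    simp only [Set.mem_preimage, Set.mem_Iic]
    rw [le_div_iff₀ hσ]
    constructor <;> intro h <;> nlinarith
  rw [this]
  rfl

lemma integral_EI (μ σ fstar : ℝ) (hσ : 0 < σ) :
    ∫ x, max 0 (fstar - x) ∂(gaussianReal μ ((σ ^ 2).toNNReal)) =
      σ * ((fstar - μ) / σ) * stdNormalCDF ((fstar - μ) / σ) +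
        σ * stdNormalPDF ((fstar - μ) / σ) := by
  set z := (fstar - μ) / σ with hzdef
  have hσz : σ * z = fstar - μ := by
    rw [hzdef]; field_simp
  rw [gaussianReal_eq_map μ σ hσ,
    integral_map ((measurable_const_mul σ).add_const μ).aemeasurable
      ((by fun_prop : Continuous fun y : ℝ => max 0 (fstar - y)).aestronglyMeasurable)]
  have : (fun x => max 0 (fstar - (σ * x + μ))) = fun x => σ * max 0 (z - x) := by
    funext x
    rw [mul_max_of_nonneg _ _ hσ.le, mul_zero, mul_sub, hσz]
    ring_nf
  rw [this, integral_const_mul, integral_max_std]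
  ring

/-- Expected improvement with constraints (Schonlau et al.): for mutually independent
Gaussians `f ~ N(μf, σf²)` and `cⱼ ~ N(μc j, (σc j)²)`, the improvement
`I = max(0, fstar - f)` if all `cⱼ ≤ 0` and `I = 0` otherwise satisfies
`E[I] = (σf z Φ(z) + σf φ(z)) ∏ⱼ Φ(-μcⱼ/σcⱼ)` with `z = (fstar - μf)/σf`. -/
theorem expected_improvement_with_constraints
    {Ω : Type*} [MeasurableSpace Ω] (P : Measure Ω) [IsProbabilityMeasure P]
    (J : ℕ) (f : Ω → ℝ) (c : Fin J → Ω → ℝ)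
    (μf σf fstar : ℝ) (hσf : 0 < σf) (μc σc : Fin J → ℝ) (hσc : ∀ j, 0 < σc j)
    (X : Option (Fin J) → Ω → ℝ)
    (hX : X none = f) (hXc : ∀ j, X (some j) = c j)
    (hindep : iIndepFun X P)
    (hf : Measure.map f P = gaussianReal μf ((σf ^ 2).toNNReal))
    (hc : ∀ j, Measure.map (c j) P = gaussianReal (μc j) (((σc j) ^ 2).toNNReal)) :
    ∫ ω, (if ∀ j, c j ω ≤ 0 then max 0 (fstar - f ω) else 0) ∂P =
      (σf * ((fstar - μf) / σf) * stdNormalCDF ((fstar - μf) / σf) +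
          σf * stdNormalPDF ((fstar - μf) / σf)) *
        ∏ j, stdNormalCDF (-(μc j) / σc j) := by
  classical
  have hfm : AEMeasurable f P := aemeasurable_of_map_neZero (by rw [hf]; infer_instance)
  have hcm : ∀ j, AEMeasurable (c j) P := fun j =>
    aemeasurable_of_map_neZero (by rw [hc j]; infer_instance)
  set f' := hfm.mk f with hf'def
  set c' := fun j => (hcm j).mk (c j) with hc'def
  have hf'meas : Measurable f' := hfm.measurable_mk
  have hc'meas : ∀ j, Measurable (c' j) := fun j => (hcm j).measurable_mk
  have hfe : f =ᵐ[P] f' := hfm.ae_eq_mk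
  have hce : ∀ j, c j =ᵐ[P] c' j := fun j => (hcm j).ae_eq_mk
  set X' : Option (Fin J) → Ω → ℝ := fun i => Option.elim i f' c' with hX'def
  have hX'meas : ∀ i, Measurable (X' i) := by
    rintro (_ | j)
    · exact hf'meas
    · exact hc'meas j
  have hXe : ∀ i, X i =ᵐ[P] X' i := by
    rintro (_ | j)
    · rw [hX]; exact hfe
    · rw [hXc j]; exact hce j
  have hindep' : iIndepFun X' P := by
    rw [iIndepFun_iff_measure_inter_preimage_eq_mul] at hindep ⊢
    intro S sets hsets
    have hae : ∀ᵐ ω ∂P, ∀ i ∈ S, X i ω = X' i ω :=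
      (ae_ball_iff S.countable_toSet).2 fun i _ => hXe i
    have h1 : (⋂ i ∈ S, X i ⁻¹' sets i) =ᵐ[P] (⋂ i ∈ S, X' i ⁻¹' sets i) := by
      rw [Filter.eventuallyEq_set]
      filter_upwards [hae] with ω hω
      simp only [Set.mem_iInter, Set.mem_preimage]
      constructor
      · intro h i hi; rw [← hω i hi]; exact h i hi
      · intro h i hi; rw [hω i hi]; exact h i hi
    have h2 : ∀ i ∈ S, P (X i ⁻¹' sets i) = P (X' i ⁻¹' sets i) := by
      intro i hi
      apply measure_congr
      rw [Filter.eventuallyEq_set]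
      filter_upwards [hXe i] with ω hω
      simp [Set.mem_preimage, hω]
    rw [← measure_congr h1, hindep S hsets]
    exact Finset.prod_congr rfl h2
  set cv : Ω → (Fin J → ℝ) := fun ω j => c' j ω with hcvdef
  have hcvmeas : Measurable cv := measurable_pi_lambda _ fun j => hc'meas j
  have hIndfc : IndepFun f' cv P := by
    have hST : Disjoint ({none} : Finset (Option (Fin J))) (Finset.univ.image some) := by
      simp [Finset.disjoint_left]
    have h := hindep'.indepFun_finset {none} (Finset.univ.image some) hST hX'meas
    have h2 := h.comp
      (show Measurable fun (v : ({none} : Finset (Option (Fin J))) → ℝ) =>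
        v ⟨none, Finset.mem_singleton_self none⟩ from measurable_pi_apply _)
      (show Measurable fun (v : ((Finset.univ.image some : Finset (Option (Fin J)))) → ℝ) =>
        (fun j : Fin J => v ⟨some j, by simp⟩) from
        measurable_pi_lambda _ fun j => measurable_pi_apply _)
    exact h2
  set G : ℝ → ℝ := fun x => max 0 (fstar - x) with hGdef
  have hGcont : Continuous G := by rw [hGdef]; fun_prop
  set A : Set Ω := ⋂ j, c' j ⁻¹' Set.Iic 0 with hAdef
  have hAmeas : MeasurableSet A := MeasurableSet.iInter fun j => hc'meas j measurableSet_Iic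
  have hsetmeas : MeasurableSet {v : Fin J → ℝ | ∀ j, v j ≤ 0} := by
    have : {v : Fin J → ℝ | ∀ j, v j ≤ 0} = ⋂ j, (fun v : Fin J → ℝ => v j) ⁻¹' Set.Iic 0 := by
      ext v; simp
    rw [this]
    exact MeasurableSet.iInter fun j => (measurable_pi_apply j) measurableSet_Iic
  set H : (Fin J → ℝ) → ℝ := fun v => if ∀ j, v j ≤ 0 then 1 else 0 with hHdef
  have hHmeas : Measurable H := Measurable.ite hsetmeas measurable_const measurable_const
  have hIndGH : IndepFun (G ∘ f') (H ∘ cv) P := hIndfc.comp hGcont.measurable hHmeas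
  have hcongr : (fun ω => if ∀ j, c j ω ≤ 0 then max 0 (fstar - f ω) else 0) =ᵐ[P]
      (G ∘ f') * (H ∘ cv) := by
    have hcae : ∀ᵐ ω ∂P, ∀ j, c j ω = c' j ω := ae_all_iff.2 fun j => hce j
    filter_upwards [hfe, hcae] with ω h1 h2
    simp only [Pi.mul_apply, Function.comp_apply, hGdef, hHdef, hcvdef]
    by_cases hcond : ∀ j, c j ω ≤ 0
    · have hcond' : ∀ j, c' j ω ≤ 0 := fun j => (h2 j) ▸ hcond j
      rw [if_pos hcond, if_pos hcond', ← h1, mul_one]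
    · have hcond' : ¬ ∀ j, c' j ω ≤ 0 := fun hh => hcond fun j => (h2 j).symm ▸ hh j
      rw [if_neg hcond, if_neg hcond', mul_zero]
  rw [integral_congr_ae hcongr,
    hIndGH.integral_mul_eq_mul_integral (hGcont.measurable.comp hf'meas).aestronglyMeasurable
      (hHmeas.comp hcvmeas).aestronglyMeasurable]
  have hmapf' : Measure.map f' P = gaussianReal μf ((σf ^ 2).toNNReal) := by
    rw [← Measure.map_congr hfe, hf]
  have hG : ∫ ω, (G ∘ f') ω ∂P =
      σf * ((fstar - μf) / σf) * stdNormalCDF ((fstar - μf) / σf) +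
        σf * stdNormalPDF ((fstar - μf) / σf) := by
    have h1 : ∫ ω, (G ∘ f') ω ∂P = ∫ x, G x ∂(Measure.map f' P) :=
      (integral_map hf'meas.aemeasurable hGcont.aestronglyMeasurable).symm
    rw [h1, hmapf', hGdef]
    exact integral_EI μf σf fstar hσf
  have hH : ∫ ω, (H ∘ cv) ω ∂P = ∏ j, stdNormalCDF (-(μc j) / σc j) := by
    have h1 : (H ∘ cv) = A.indicator (1 : Ω → ℝ) := by
      funext ω
      by_cases hcond : ∀ j, c' j ω ≤ 0
      · have : ω ∈ A := by simp [hAdef, Set.mem_iInter, hcond]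
        simp only [Function.comp_apply, hHdef, hcvdef, Set.indicator_of_mem this]
        rw [if_pos hcond]; rfl
      · have : ω ∉ A := fun hmem => hcond fun j => by simpa using Set.mem_iInter.1 hmem j
        simp only [Function.comp_apply, hHdef, hcvdef, Set.indicator_of_notMem this]
        rw [if_neg hcond]
    rw [h1, integral_indicator_one hAmeas]
    have hPA : P A = ∏ j, P (c' j ⁻¹' Set.Iic 0) := by
      set s : Option (Fin J) → Set Ω :=
        fun i => Option.elim i Set.univ (fun j => c' j ⁻¹' Set.Iic 0) with hsdef
      have hs : ∀ i, MeasurableSet[MeasurableSpace.comap (X' i) inferInstance] (s i) := by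
        rintro (_ | j)
        · exact MeasurableSet.univ
        · exact ⟨Set.Iic 0, measurableSet_Iic, rfl⟩
      have h := hindep'.meas_iInter hs
      have h1 : (⋂ i, s i) = A := by
        rw [Set.iInter_option]
        simp [hsdef, hAdef]
      rw [← h1, h, Fintype.prod_option]
      simp [hsdef]
    rw [measureReal_def, hPA, ENNReal.toReal_prod]
    refine Finset.prod_congr rfl fun j _ => ?_
    have hmapc : Measure.map (c' j) P = gaussianReal (μc j) (((σc j) ^ 2).toNNReal) := by
      rw [← Measure.map_congr (hce j), hc j]
    rw [← Measure.map_apply (hc'meas j) measurableSet_Iic, hmapc,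
      gaussianReal_Iic (μc j) (σc j) 0 (hσc j), zero_sub]
  rw [hG, hH]
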